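/- The parallel composition operation on TTSBs is associative: for any pairwise compatible TTSBs T₁, T₂ and T₃, the composition T₁‖T₂ is compatible with T₃, T₁ is compatible with T₂‖T₃, and (T₁‖T₂)‖T₃ = T₁‖(T₂‖T₃) (same external and internal variable sets, same state set, same initial state, and same committed and uncommitted transition relations). -/

import Mathlib

open Classical

noncomputable section

namespace TTSBpaper

/-! ### Partial functions / valuations -/

/-- The domain of a partial function. -/
def dom {α β : Type*} (f : α → Option β) : Set α := {x | f x ≠ none}

/-- The override operator. -/
def override {α β : Type*} (f g : α → Option β) : α → Option β :=
  fun x => if x ∈ dom f then f x else g x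

/-- Restriction of a partial function to a set. -/
def restrictV {α β : Type*} (f : α → Option β) (X : Set α) : α → Option β :=
  fun x => if x ∈ X then f x else none

/-- Compatibility of partial functions. -/
def compatV {α β : Type*} (f g : α → Option β) : Prop :=
  ∀ x ∈ dom f ∩ dom g, f x = g x

/-- Update of f according to g. -/
def updV {α β : Type*} (f g : α → Option β) : α → Option β :=
  restrictV (override g f) (dom f)

/-- A property P (a set of valuations over V) does not depend on the variables in W. -/
def indep {α β : Type*} (V W : Set α) (P : Set (α → Option β)) : Prop :=
  ∀ v u, dom v = V → dom u = W → (v ∈ P ↔ updV v u ∈ P)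

variable {Var Data BCh CCh : Type}

/-- Values: nonnegative reals for clocks, plus arbitrary data. -/
abbrev Value (Data : Type) : Type := NNReal ⊕ Data

/-- Valuations over a universal set of variables, as partial functions. -/
abbrev Valn (Var Data : Type) : Type := Var → Option (Value Data)

/-- Singleton valuation. -/
def single (x : Var) (v : Value Data) : Valn Var Data :=
  fun y => if y = x then some v else none

/-- Time shift v ⊕ d : all clocks (variables in X) advance by d. -/
def oplus (X : Set Var) (v : Valn Var Data) (d : NNReal) : Valn Var Data :=
  fun y => if y ∈ X then (v y).map (Sum.map (fun r => r + d) id) else v y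

/-- A property is left-closed w.r.t. time passage. -/
def leftClosed (X : Set Var) (P : Set (Valn Var Data)) : Prop :=
  ∀ v d, oplus X v d ∈ P → v ∈ P

/-! ### Actions -/

/-- Actions: broadcast output/input, binary output/input, internal, and time passage. -/
inductive Act (BCh CCh : Type) : Type where
  | bsend : BCh → Act BCh CCh
  | brecv : BCh → Act BCh CCh
  | send : CCh → Act BCh CCh
  | recv : CCh → Act BCh CCh
  | tau : Act BCh CCh
  | delay : NNReal → Act BCh CCh

/-- Binary actions. -/
def Act.isBinary : Act BCh CCh → Prop
  | .send _ => True
  | .recv _ => True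
  | _ => False

/-- Binary or broadcast actions. -/
def Act.isSync : Act BCh CCh → Prop
  | .send _ => True
  | .recv _ => True
  | .bsend _ => True
  | .brecv _ => True
  | _ => False

/-- Actions removed by restriction to channel sets Cb, Cc. -/
def Act.removedBy (Cb : Set BCh) (Cc : Set CCh) : Act BCh CCh → Prop
  | .brecv d => d ∈ Cb
  | .send c => c ∈ Cc
  | .recv c => c ∈ Cc
  | _ => False

/-- Actions whose label is kept unchanged by restriction to channel sets Cb, Cc. -/
def Act.keptBy (Cb : Set BCh) (Cc : Set CCh) : Act BCh CCh → Prop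
  | .bsend d => d ∉ Cb
  | .brecv d => d ∉ Cb
  | .send c => c ∉ Cc
  | .recv c => c ∉ Cc
  | _ => True

/-! ### Timed transition systems with broadcast actions -/

/-- The data of a TTSB: external/internal variables, states, initial state and
committed (`true`) / uncommitted (`false`) transition relations. -/
structure PreTTSB (Var Data BCh CCh : Type) : Type where
  E : Set Var
  H : Set Var
  S : Set (Valn Var Data)
  init : Valn Var Data
  Tr : Bool → Valn Var Data → Act BCh CCh → Valn Var Data → Prop

/-- The variables of a TTSB. -/
def PreTTSB.V (T : PreTTSB Var Data BCh CCh) : Set Var := T.E ∪ T.H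

/-- A state is committed iff some committed transition starts in it. -/
def PreTTSB.Comm (T : PreTTSB Var Data BCh CCh) (s : Valn Var Data) : Prop :=
  ∃ a t, T.Tr true s a t

/-- `T` is a timed transition system with broadcast actions (with clock set `X`):
well-formedness plus Axioms I–VI of the paper. -/
structure IsTTSB (X : Set Var) (T : PreTTSB Var Data BCh CCh) : Prop where
  disjEH : Disjoint T.E T.H
  statesDom : ∀ s ∈ T.S, dom s = T.V
  initMem : T.init ∈ T.S
  trMem : ∀ {b s a t}, T.Tr b s a t → s ∈ T.S ∧ t ∈ T.S
  trDisj : ∀ s a t, ¬ (T.Tr true s a t ∧ T.Tr false s a t)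
  axI : ∀ {s a t b a' t'}, T.Tr true s a t → T.Tr b s a' t' →
      a'.isSync ∨ (a' = Act.tau ∧ b = true)
  axII : ∀ {s} (u : Valn Var Data), s ∈ T.S → dom u = T.E → updV s u ∈ T.S
  axIIIc : ∀ {b s t} (u : Valn Var Data) (c : CCh), dom u = T.E →
      T.Tr b s (Act.recv c) t → ∃ t', T.Tr b (updV s u) (Act.recv c) t'
  axIIIb : ∀ {b s t} (u : Valn Var Data) (d : BCh), dom u = T.E →
      T.Tr b s (Act.brecv d) t → ∃ t', T.Tr b (updV s u) (Act.brecv d) t'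
  axIV : ∀ {s d t}, T.Tr false s (Act.delay d) t → t = oplus X s d
  axV : ∀ (d : BCh), ∀ s ∈ T.S, ∃ b t, T.Tr b s (Act.brecv d) t
  axVI : ∀ {b s t} (d : BCh), T.Tr b s (Act.brecv d) t →
      restrictV s T.E = restrictV t T.E

/-- Compatibility of two TTSBs. -/
def Compatible (T1 T2 : PreTTSB Var Data BCh CCh) : Prop :=
  T1.H ∩ T2.V = ∅ ∧ T2.H ∩ T1.V = ∅ ∧ compatV T1.init T2.init

/-- Comparability of two TTSBs. -/
def Comparable (T1 T2 : PreTTSB Var Data BCh CCh) : Prop := T1.E = T2.E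

/-- The transition relations of the parallel composition of two TTSBs
(rules EXT, TAU, SYNC, TIME, SND, RCV of the paper, in both directions). -/
inductive ParTr (T1 T2 : PreTTSB Var Data BCh CCh) :
    Bool → Valn Var Data → Act BCh CCh → Valn Var Data → Prop where
  | ext₁ {r s r' : Valn Var Data} {a : Act BCh CCh} {b : Bool}
      (hr : r ∈ T1.S) (hs : s ∈ T2.S) (hc : compatV r s)
      (ha : a.isBinary) (ht : T1.Tr b r a r') :
      ParTr T1 T2 b (override r s) a (override r' s)
  | ext₂ {r s s' : Valn Var Data} {a : Act BCh CCh} {b : Bool}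
      (hr : r ∈ T1.S) (hs : s ∈ T2.S) (hc : compatV r s)
      (ha : a.isBinary) (ht : T2.Tr b s a s') :
      ParTr T1 T2 b (override r s) a (override s' r)
  | tau₁ {r s r' : Valn Var Data} {b : Bool}
      (hr : r ∈ T1.S) (hs : s ∈ T2.S) (hc : compatV r s)
      (ht : T1.Tr b r Act.tau r') (hcm : T2.Comm s → b = true) :
      ParTr T1 T2 b (override r s) Act.tau (override r' s)
  | tau₂ {r s s' : Valn Var Data} {b : Bool}
      (hr : r ∈ T1.S) (hs : s ∈ T2.S) (hc : compatV r s)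
      (ht : T2.Tr b s Act.tau s') (hcm : T1.Comm r → b = true) :
      ParTr T1 T2 b (override r s) Act.tau (override s' r)
  | sync₁ {r s r' s' : Valn Var Data} {c : CCh} {b b' : Bool}
      (hr : r ∈ T1.S) (hs : s ∈ T2.S) (hc : compatV r s)
      (ht1 : T1.Tr b r (Act.send c) r') (ht2 : T2.Tr b' (updV s r') (Act.recv c) s')
      (hcm : (T1.Comm r ∨ T2.Comm s) → (b || b') = true) :
      ParTr T1 T2 (b || b') (override r s) Act.tau (override s' r')
  | sync₂ {r s r' s' : Valn Var Data} {c : CCh} {b b' : Bool}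
      (hr : r ∈ T1.S) (hs : s ∈ T2.S) (hc : compatV r s)
      (ht1 : T2.Tr b s (Act.send c) s') (ht2 : T1.Tr b' (updV r s') (Act.recv c) r')
      (hcm : (T2.Comm s ∨ T1.Comm r) → (b || b') = true) :
      ParTr T1 T2 (b || b') (override r s) Act.tau (override r' s')
  | time₁ {r s r' s' : Valn Var Data} {d : NNReal}
      (hr : r ∈ T1.S) (hs : s ∈ T2.S) (hc : compatV r s)
      (ht1 : T1.Tr false r (Act.delay d) r') (ht2 : T2.Tr false s (Act.delay d) s') :
      ParTr T1 T2 false (override r s) (Act.delay d) (override r' s')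
  | time₂ {r s r' s' : Valn Var Data} {d : NNReal}
      (hr : r ∈ T1.S) (hs : s ∈ T2.S) (hc : compatV r s)
      (ht1 : T2.Tr false s (Act.delay d) s') (ht2 : T1.Tr false r (Act.delay d) r') :
      ParTr T1 T2 false (override r s) (Act.delay d) (override s' r')
  | snd₁ {r s r' s' : Valn Var Data} {δ : BCh} {b b' : Bool}
      (hr : r ∈ T1.S) (hs : s ∈ T2.S) (hc : compatV r s)
      (ht1 : T1.Tr b r (Act.bsend δ) r') (ht2 : T2.Tr b' (updV s r') (Act.brecv δ) s') :
      ParTr T1 T2 (b || b') (override r s) (Act.bsend δ) (override r' s')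
  | snd₂ {r s r' s' : Valn Var Data} {δ : BCh} {b b' : Bool}
      (hr : r ∈ T1.S) (hs : s ∈ T2.S) (hc : compatV r s)
      (ht1 : T2.Tr b s (Act.bsend δ) s') (ht2 : T1.Tr b' (updV r s') (Act.brecv δ) r') :
      ParTr T1 T2 (b || b') (override r s) (Act.bsend δ) (override s' r')
  | rcv₁ {r s r' s' : Valn Var Data} {δ : BCh} {b b' : Bool}
      (hr : r ∈ T1.S) (hs : s ∈ T2.S) (hc : compatV r s)
      (ht1 : T1.Tr b r (Act.brecv δ) r') (ht2 : T2.Tr b' s (Act.brecv δ) s') :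
      ParTr T1 T2 (b || b') (override r s) (Act.brecv δ) (override r' s')
  | rcv₂ {r s r' s' : Valn Var Data} {δ : BCh} {b b' : Bool}
      (hr : r ∈ T1.S) (hs : s ∈ T2.S) (hc : compatV r s)
      (ht1 : T2.Tr b s (Act.brecv δ) s') (ht2 : T1.Tr b' r (Act.brecv δ) r') :
      ParTr T1 T2 (b || b') (override r s) (Act.brecv δ) (override s' r')

/-- Parallel composition of TTSBs. -/
def par (T1 T2 : PreTTSB Var Data BCh CCh) : PreTTSB Var Data BCh CCh where
  E := T1.E ∪ T2.E
  H := T1.H ∪ T2.H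
  S := {v | ∃ r ∈ T1.S, ∃ s ∈ T2.S, compatV r s ∧ v = override r s}
  init := override T1.init T2.init
  Tr := ParTr T1 T2

/-- n-ary (left-associated) parallel composition. -/
def parAll (T : PreTTSB Var Data BCh CCh) (Ts : List (PreTTSB Var Data BCh CCh)) :
    PreTTSB Var Data BCh CCh :=
  Ts.foldl par T

/-- The restriction operator on TTSBs: channels in Cb/Cc and external variables in Ce
are internalized, following Definition 10 of the paper. -/
def restr (T : PreTTSB Var Data BCh CCh) (Cb : Set BCh) (Cc : Set CCh) (Ce : Set Var) :
    PreTTSB Var Data BCh CCh where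
  E := T.E \ Ce
  H := T.H ∪ (T.E ∩ Ce)
  S := T.S
  init := T.init
  Tr := fun b s a t =>
    (T.Tr b s a t ∧ Act.keptBy Cb Cc a) ∨
    (a = Act.tau ∧ ∃ δ ∈ Cb, T.Tr b s (Act.bsend δ) t ∧ (T.Comm s → b = true))

/-- Broadcast channels enabled in the transitions of T. -/
def enabledB (T : PreTTSB Var Data BCh CCh) : Set BCh :=
  {δ | ∃ b s t, T.Tr b s (Act.bsend δ) t ∨ T.Tr b s (Act.brecv δ) t}

/-- Binary channels enabled in the transitions of T. -/
def enabledC (T : PreTTSB Var Data BCh CCh) : Set CCh :=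
  {c | ∃ b s t, T.Tr b s (Act.send c) t ∨ T.Tr b s (Act.recv c) t}

/-! ### Timed step simulation -/

/-- R is a timed step simulation from T1 to T2 (Definition 11 of the paper). -/
structure IsTimedStepSim (T1 T2 : PreTTSB Var Data BCh CCh)
    (R : Valn Var Data → Valn Var Data → Prop) : Prop where
  mem : ∀ {r s}, R r s → r ∈ T1.S ∧ s ∈ T2.S
  initR : R T1.init T2.init
  extEq : ∀ {r s}, R r s → restrictV r T1.E = restrictV s T2.E
  updR : ∀ {r s} (u : Valn Var Data), R r s → dom u = T1.E → R (updV r u) (updV s u)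
  commR : ∀ {r s}, R r s → T2.Comm s → T1.Comm r
  stepR : ∀ {r s b a r'}, R r s → T1.Tr b r a r' →
      (∃ s', T2.Tr b s a s' ∧ R r' s') ∨ (a = Act.tau ∧ R r' s)

/-- T1 ≼ T2 : some timed step simulation from T1 to T2 exists. -/
def simLE (T1 T2 : PreTTSB Var Data BCh CCh) : Prop :=
  ∃ R, IsTimedStepSim T1 T2 R

/-! ### Timed automata -/

/-- Edge labels of timed automata (actions without time passage). -/
inductive ELab (BCh CCh : Type) : Type where
  | bsend : BCh → ELab BCh CCh
  | brecv : BCh → ELab BCh CCh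
  | send : CCh → ELab BCh CCh
  | recv : CCh → ELab BCh CCh
  | tau : ELab BCh CCh

/-- Edge labels as actions. -/
def ELab.toAct : ELab BCh CCh → Act BCh CCh
  | .bsend δ => .bsend δ
  | .brecv δ => .brecv δ
  | .send c => .send c
  | .recv c => .recv c
  | .tau => .tau

/-- A timed automaton: locations (a set of data values), committed locations, initial
location, external/internal variables, initial valuation, invariants, transitions
(location, guard, action, update function, location) and urgent transitions. -/
structure TA (Var Data BCh CCh : Type) : Type where
  L : Set Data
  K : Set Data
  l0 : Data
  E : Set Var
  H : Set Var
  v0 : Valn Var Data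
  Inv : Data → Set (Valn Var Data)
  Tr : Data → Set (Valn Var Data) → ELab BCh CCh →
      (Valn Var Data → Valn Var Data) → Data → Prop
  UTr : Data → Set (Valn Var Data) → ELab BCh CCh →
      (Valn Var Data → Valn Var Data) → Data → Prop

/-- The variables of a timed automaton. -/
def TA.V (A : TA Var Data BCh CCh) : Set Var := A.E ∪ A.H

/-- Well-formedness of a timed automaton, together with Axioms VII–XI of the paper
(clock set X). -/
structure TAok (X : Set Var) (A : TA Var Data BCh CCh) : Prop where
  disjEH : Disjoint A.E A.H
  l0mem : A.l0 ∈ A.L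
  Ksub : A.K ⊆ A.L
  v0dom : dom A.v0 = A.V
  v0inv : restrictV A.v0 A.V ∈ A.Inv A.l0
  invLC : ∀ l, leftClosed X (A.Inv l)
  urgSub : ∀ {l g a ρ l'}, A.UTr l g a ρ l' → A.Tr l g a ρ l'
  trLoc : ∀ {l g a ρ l'}, A.Tr l g a ρ l' → l ∈ A.L ∧ l' ∈ A.L
  updDom : ∀ {l g a ρ l'}, A.Tr l g a ρ l' → ∀ v, dom v = A.V → dom (ρ v) = A.V
  axVII : ∀ l, indep A.V A.E (A.Inv l)
  axVIIIc : ∀ {l g ρ l'} (c : CCh), A.Tr l g (ELab.recv c) ρ l' → indep A.V A.E g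
  axVIIIb : ∀ {l g ρ l'} (δ : BCh), A.Tr l g (ELab.brecv δ) ρ l' → indep A.V A.E g
  axIX : ∀ {l}, l ∈ A.K → ∀ v, dom v = A.V → v ∈ A.Inv l →
      ∃ g a ρ l', A.Tr l g a ρ l' ∧ v ∈ g ∧ ρ v ∈ A.Inv l'
  axX : ∀ {l g a ρ l'}, A.UTr l g a ρ l' → a = ELab.tau ∧ indep A.V (A.V ∩ X) g
  axXI : ∀ {l g ρ l'} (δ : BCh), A.Tr l g (ELab.brecv δ) ρ l' →
      ∀ v, restrictV (ρ v) A.E = restrictV v A.E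

/-- States of the TTSB associated to a TA with location variable ℓ. -/
def taState (A : TA Var Data BCh CCh) (ℓ : Var) : Set (Valn Var Data) :=
  {v | dom v = A.V ∪ {ℓ} ∧
    ∃ l ∈ A.L, v ℓ = some (Sum.inr l) ∧ restrictV v A.V ∈ A.Inv l}

/-- Application of an update function ρ : Val(V) → Val(V) to a larger state. -/
def applyU (A : TA Var Data BCh CCh) (ρ : Valn Var Data → Valn Var Data)
    (s : Valn Var Data) : Valn Var Data :=
  updV s (ρ (restrictV s A.V))

/-- The transition relations of the TTSB associated to a TA
(rules ACT, TIME and VIRT of the paper). -/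
inductive TATrans (X : Set Var) (A : TA Var Data BCh CCh) (ℓ : Var) :
    Bool → Valn Var Data → Act BCh CCh → Valn Var Data → Prop where
  | act {s : Valn Var Data} {l : Data} {g : Set (Valn Var Data)} {a : ELab BCh CCh}
      {ρ : Valn Var Data → Valn Var Data} {l' : Data} {b : Bool}
      (hs : s ∈ taState A ℓ) (hl : s ℓ = some (Sum.inr l))
      (ht : A.Tr l g a ρ l') (hg : restrictV s A.V ∈ g)
      (hb : b = true ↔ l ∈ A.K)
      (hs' : updV (applyU A ρ s) (single ℓ (Sum.inr l')) ∈ taState A ℓ) :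
      TATrans X A ℓ b s a.toAct (updV (applyU A ρ s) (single ℓ (Sum.inr l')))
  | time {s : Valn Var Data} {l : Data} {d : NNReal}
      (hs : s ∈ taState A ℓ) (hl : s ℓ = some (Sum.inr l)) (hK : l ∉ A.K)
      (hs' : oplus X s d ∈ taState A ℓ)
      (hurg : ∀ d' : NNReal, d' ≤ d → ∀ g ρ l', A.UTr l g ELab.tau ρ l' →
          restrictV (oplus X s d') A.V ∉ g) :
      TATrans X A ℓ false s (Act.delay d) (oplus X s d)
  | virt {s : Valn Var Data} {l : Data} (δ : BCh)
      (hs : s ∈ taState A ℓ) (hl : s ℓ = some (Sum.inr l))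
      (hno : ∀ g ρ l', A.Tr l g (ELab.brecv δ) ρ l' → restrictV s A.V ∉ g) :
      TATrans X A ℓ false s (Act.brecv δ) s

/-- The TTSB associated to a timed automaton. -/
def TTSBof (X : Set Var) (A : TA Var Data BCh CCh) (ℓ : Var) :
    PreTTSB Var Data BCh CCh where
  E := A.E
  H := A.H ∪ {ℓ}
  S := taState A ℓ
  init := override A.v0 (single ℓ (Sum.inr A.l0))
  Tr := TATrans X A ℓ

/-! ### Networks of timed automata and their non-compositional semantics -/

/-- A network component: a timed automaton together with its (fresh) location variable. -/
abbrev Comp (Var Data BCh CCh : Type) : Type := TA Var Data BCh CCh × Var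

/-- The variables of a component, including its location variable. -/
def compW (c : Comp Var Data BCh CCh) : Set Var := c.1.V ∪ {c.2}

/-- The TTSB associated to a component. -/
def TTSBofC (X : Set Var) (c : Comp Var Data BCh CCh) : PreTTSB Var Data BCh CCh :=
  TTSBof X c.1 c.2

/-- All variables of a network. -/
def NTAvars (N : List (Comp Var Data BCh CCh)) : Set Var :=
  {x | ∃ c ∈ N, x ∈ compW c}

/-- The states of the non-compositional (UPPAAL) semantics of a network. -/
def NTAstates (N : List (Comp Var Data BCh CCh)) : Set (Valn Var Data) :=
  {v | dom v = NTAvars N ∧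
    ∀ c ∈ N, ∃ l ∈ c.1.L, v c.2 = some (Sum.inr l) ∧ restrictV v c.1.V ∈ c.1.Inv l}

/-- The initial state of the non-compositional semantics of a network. -/
def NTAinit (N : List (Comp Var Data BCh CCh)) : Valn Var Data :=
  N.foldr (fun c w => override (override c.1.v0 (single c.2 (Sum.inr c.1.l0))) w)
    (fun _ => none)

/-- A component is in a committed location at state s. -/
def atCommitted (c : Comp Var Data BCh CCh) (s : Valn Var Data) : Prop :=
  ∃ l ∈ c.1.K, s c.2 = some (Sum.inr l)

/-- No component of the network is in a committed location. -/
def noneCommitted (N : List (Comp Var Data BCh CCh)) (s : Valn Var Data) : Prop :=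
  ∀ c ∈ N, ¬ atCommitted c s

/-- Application of a component update function to a network state. -/
def applyC (c : Comp Var Data BCh CCh) (ρ : Valn Var Data → Valn Var Data)
    (s : Valn Var Data) : Valn Var Data :=
  updV s (ρ (restrictV s c.1.V))

/-- j ∈ RS(δ, i, s): component j (≠ i) has an executable δ?-transition in s. -/
def RSmem (N : List (Comp Var Data BCh CCh)) (δ : BCh) (i : ℕ) (s : Valn Var Data)
    (j : ℕ) : Prop :=
  j ≠ i ∧ ∃ (hj : j < N.length), ∃ l g ρ l',
    s (N.get ⟨j, hj⟩).2 = some (Sum.inr l) ∧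
    (N.get ⟨j, hj⟩).1.Tr l g (ELab.brecv δ) ρ l' ∧
    restrictV s (N.get ⟨j, hj⟩).1.V ∈ g

/-- Apply the chosen receiver updates in index order (left-to-right). -/
def bcastUpds (N : List (Comp Var Data BCh CCh)) (δ : BCh) (i : ℕ) (s0 : Valn Var Data)
    (ρs : ℕ → Valn Var Data → Valn Var Data) (v : Valn Var Data) : Valn Var Data :=
  (List.range N.length).foldl
    (fun w j =>
      if hj : j < N.length then
        if RSmem N δ i s0 j then applyC (N.get ⟨j, hj⟩) (ρs j) w else w
      else w) v

/-- Update the location variables of all receivers. -/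
def bcastLocs (N : List (Comp Var Data BCh CCh)) (δ : BCh) (i : ℕ) (s0 : Valn Var Data)
    (ls' : ℕ → Data) (v : Valn Var Data) : Valn Var Data :=
  (List.range N.length).foldl
    (fun w j =>
      if hj : j < N.length then
        if RSmem N δ i s0 j then
          updV w (single (N.get ⟨j, hj⟩).2 (Sum.inr (ls' j)))
        else w
      else w) v

/-- The non-compositional (UPPAAL) transition relation of a network
(rules TAU, SYNC, TIME and BCST of the paper). -/
inductive NTATr (X : Set Var) (N : List (Comp Var Data BCh CCh)) :
    Valn Var Data → Act BCh CCh → Valn Var Data → Prop where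
  | tau {s : Valn Var Data} {i : ℕ} (hi : i < N.length)
      {l : Data} {g : Set (Valn Var Data)} {ρ : Valn Var Data → Valn Var Data} {l' : Data}
      (hs : s ∈ NTAstates N)
      (hl : s (N.get ⟨i, hi⟩).2 = some (Sum.inr l))
      (ht : (N.get ⟨i, hi⟩).1.Tr l g ELab.tau ρ l')
      (hg : restrictV s (N.get ⟨i, hi⟩).1.V ∈ g)
      (hcomm : noneCommitted N s ∨ l ∈ (N.get ⟨i, hi⟩).1.K)
      (hs' : updV (applyC (N.get ⟨i, hi⟩) ρ s)
          (single (N.get ⟨i, hi⟩).2 (Sum.inr l')) ∈ NTAstates N) :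
      NTATr X N s Act.tau
        (updV (applyC (N.get ⟨i, hi⟩) ρ s) (single (N.get ⟨i, hi⟩).2 (Sum.inr l')))
  | sync {s : Valn Var Data} {i j : ℕ} (hi : i < N.length) (hj : j < N.length)
      (hij : i ≠ j) {li lj li' lj' : Data} {gi gj : Set (Valn Var Data)}
      {ρi ρj : Valn Var Data → Valn Var Data} {c : CCh}
      (hs : s ∈ NTAstates N)
      (hli : s (N.get ⟨i, hi⟩).2 = some (Sum.inr li))
      (hlj : s (N.get ⟨j, hj⟩).2 = some (Sum.inr lj))
      (hti : (N.get ⟨i, hi⟩).1.Tr li gi (ELab.send c) ρi li')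
      (htj : (N.get ⟨j, hj⟩).1.Tr lj gj (ELab.recv c) ρj lj')
      (hgi : restrictV s (N.get ⟨i, hi⟩).1.V ∈ gi)
      (hgj : restrictV s (N.get ⟨j, hj⟩).1.V ∈ gj)
      (hcomm : noneCommitted N s ∨ li ∈ (N.get ⟨i, hi⟩).1.K ∨ lj ∈ (N.get ⟨j, hj⟩).1.K)
      (hs' : updV (updV (applyC (N.get ⟨j, hj⟩) ρj (applyC (N.get ⟨i, hi⟩) ρi s))
          (single (N.get ⟨i, hi⟩).2 (Sum.inr li')))
          (single (N.get ⟨j, hj⟩).2 (Sum.inr lj')) ∈ NTAstates N) :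
      NTATr X N s Act.tau
        (updV (updV (applyC (N.get ⟨j, hj⟩) ρj (applyC (N.get ⟨i, hi⟩) ρi s))
          (single (N.get ⟨i, hi⟩).2 (Sum.inr li')))
          (single (N.get ⟨j, hj⟩).2 (Sum.inr lj')))
  | time {s : Valn Var Data} {d : NNReal}
      (hs : s ∈ NTAstates N) (hs' : oplus X s d ∈ NTAstates N)
      (hK : noneCommitted N s)
      (hurg : ¬ ∃ (i : ℕ) (hi : i < N.length), ∃ l g ρ l',
          (N.get ⟨i, hi⟩).1.UTr l g ELab.tau ρ l' ∧
          s (N.get ⟨i, hi⟩).2 = some (Sum.inr l) ∧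
          restrictV s (N.get ⟨i, hi⟩).1.V ∈ g) :
      NTATr X N s (Act.delay d) (oplus X s d)
  | bcst {s : Valn Var Data} {i : ℕ} (hi : i < N.length)
      {l l' : Data} {g : Set (Valn Var Data)} {ρ : Valn Var Data → Valn Var Data}
      {δ : BCh} (ρs : ℕ → Valn Var Data → Valn Var Data) (ls' : ℕ → Data)
      (hs : s ∈ NTAstates N)
      (hl : s (N.get ⟨i, hi⟩).2 = some (Sum.inr l))
      (ht : (N.get ⟨i, hi⟩).1.Tr l g (ELab.bsend δ) ρ l')
      (hg : restrictV s (N.get ⟨i, hi⟩).1.V ∈ g)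
      (hrecv : ∀ j (hj : j < N.length), RSmem N δ i s j →
          ∃ lj gj, s (N.get ⟨j, hj⟩).2 = some (Sum.inr lj) ∧
            (N.get ⟨j, hj⟩).1.Tr lj gj (ELab.brecv δ) (ρs j) (ls' j) ∧
            restrictV s (N.get ⟨j, hj⟩).1.V ∈ gj)
      (hcomm : noneCommitted N s ∨ l ∈ (N.get ⟨i, hi⟩).1.K ∨
          ∃ j, ∃ (hj : j < N.length), RSmem N δ i s j ∧
            ∃ lj ∈ (N.get ⟨j, hj⟩).1.K, s (N.get ⟨j, hj⟩).2 = some (Sum.inr lj))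
      (hs' : bcastLocs N δ i s ls'
          (updV (bcastUpds N δ i s ρs (applyC (N.get ⟨i, hi⟩) ρ s))
            (single (N.get ⟨i, hi⟩).2 (Sum.inr l'))) ∈ NTAstates N) :
      NTATr X N s Act.tau
        (bcastLocs N δ i s ls'
          (updV (bcastUpds N δ i s ρs (applyC (N.get ⟨i, hi⟩) ρ s))
            (single (N.get ⟨i, hi⟩).2 (Sum.inr l'))))

/-- Well-formedness of a network: components satisfy Axioms VII–XI, are pairwise
compatible, and the location variables are fresh and pairwise distinct. -/
def NTAok (X : Set Var) (N : List (Comp Var Data BCh CCh)) : Prop :=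
  (∀ c ∈ N, TAok X c.1) ∧
  N.Pairwise (fun c c' => c.1.H ∩ c'.1.V = ∅ ∧ c'.1.H ∩ c.1.V = ∅ ∧
    compatV c.1.v0 c'.1.v0) ∧
  (∀ c ∈ N, ∀ c' ∈ N, c.2 ∉ c'.1.V) ∧
  N.Pairwise (fun c c' => c.2 ≠ c'.2)

/-- Reachability in the non-compositional semantics of a network. -/
def Reach (X : Set Var) (N : List (Comp Var Data BCh CCh)) (s : Valn Var Data) : Prop :=
  Relation.ReflTransGen (fun u v => ∃ a, NTATr X N u a v) (NTAinit N) s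

/-! ### Auxiliary lemmas -/

section ValLemmas

variable {α β : Type*} {f g h u u' s t : α → Option β} {W : Set α} {x : α}

theorem mem_dom : x ∈ dom f ↔ f x ≠ none := Iff.rfl

theorem dom_override : dom (override f g) = dom f ∪ dom g := by
  ext x
  by_cases hf : x ∈ dom f <;> simp [override, dom, hf] <;> simp [dom] at hf <;> simp [hf]

theorem dom_restrictV : dom (restrictV f W) = W ∩ dom f := by
  ext x
  by_cases hw : x ∈ W <;> simp [restrictV, dom, hw]

theorem dom_updV : dom (updV f u) = dom f := by
  ext x
  by_cases hf : x ∈ dom f <;> by_cases hu : x ∈ dom u <;>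
    simp [updV, restrictV, override, dom, hf, hu] <;> simp [dom] at hf hu <;> simp [hf, hu]

theorem updV_apply :
    updV f u x = if x ∈ dom f then (if x ∈ dom u then u x else f x) else none := by
  by_cases hf : x ∈ dom f <;> by_cases hu : x ∈ dom u <;>
    simp [updV, restrictV, override, hf, hu]

theorem override_apply :
    override f g x = if x ∈ dom f then f x else g x := rfl

theorem compatV_symm (hc : compatV f g) : compatV g f := by
  intro x hx
  exact (hc x ⟨hx.2, hx.1⟩).symm

theorem compatV_of_agree (hc : ∀ x, x ∈ dom f → x ∈ dom g → f x = g x) : compatV f g :=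
  fun x hx => hc x hx.1 hx.2

theorem override_comm (hc : compatV f g) : override f g = override g f := by
  funext x
  by_cases hf : x ∈ dom f <;> by_cases hg : x ∈ dom g <;>
    simp [override, hf, hg]
  · exact hc x ⟨hf, hg⟩
  · simp [dom] at hf hg; simp [hf, hg]

theorem override_assoc : override (override f g) h = override f (override g h) := by
  funext x
  by_cases hf : x ∈ dom f <;> by_cases hg : x ∈ dom g <;>
    simp [override, dom_override, hf, hg]

theorem compatV_override_iff (hfg : compatV f g) :
    compatV (override f g) h ↔ compatV f h ∧ compatV g h := by
  constructor
  · intro hc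
    constructor
    · intro x hx
      have := hc x ⟨by rw [dom_override]; exact Or.inl hx.1, hx.2⟩
      rwa [override_apply, if_pos hx.1] at this
    · intro x hx
      have := hc x ⟨by rw [dom_override]; exact Or.inr hx.1, hx.2⟩
      rw [override_apply] at this
      by_cases hf : x ∈ dom f
      · rw [if_pos hf] at this; rw [← this]; exact (hfg x ⟨hf, hx.1⟩).symm
      · rwa [if_neg hf] at this
  · rintro ⟨h1, h2⟩ x hx
    rw [dom_override] at hx
    rw [override_apply]
    by_cases hf : x ∈ dom f
    · rw [if_pos hf]; exact h1 x ⟨hf, hx.2⟩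
    · rw [if_neg hf]; exact h2 x ⟨hx.1.resolve_left hf, hx.2⟩

theorem compatV_override_right_iff (hgh : compatV g h) :
    compatV f (override g h) ↔ compatV f g ∧ compatV f h := by
  constructor
  · intro hc
    have := (compatV_override_iff hgh).mp (compatV_symm hc)
    exact ⟨compatV_symm this.1, compatV_symm this.2⟩
  · rintro ⟨h1, h2⟩
    exact compatV_symm ((compatV_override_iff hgh).mpr ⟨compatV_symm h1, compatV_symm h2⟩)

theorem updV_compat (hc : compatV f g) : compatV (updV f u) (updV g u) := by
  intro x hx
  simp only [dom_updV] at hx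
  rw [updV_apply, updV_apply, if_pos hx.1, if_pos hx.2]
  by_cases hu : x ∈ dom u
  · simp [hu]
  · simp [hu]; exact hc x hx

theorem updV_override : updV (override f g) u = override (updV f u) (updV g u) := by
  funext x
  rw [override_apply, updV_apply, updV_apply, updV_apply, dom_updV, dom_override]
  by_cases hf : x ∈ dom f <;> by_cases hg : x ∈ dom g <;> by_cases hu : x ∈ dom u <;>
    simp [override_apply, hf, hg, hu] <;>
    (try simp [dom] at hf hg) <;> simp [hf, hg]

theorem updV_updV : updV (updV f u) u' = updV f (override u' u) := by
  funext x
  rw [updV_apply, updV_apply, updV_apply, dom_updV, dom_override]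
  by_cases hf : x ∈ dom f <;> by_cases hu : x ∈ dom u <;> by_cases hu' : x ∈ dom u' <;>
    simp [override_apply, hf, hu, hu']

/-- OV1 -/
theorem override_updV_updV_override {s' : α → Option β} (hs' : dom s' = dom s) :
    override (updV s u) (updV t (override u s')) = override (updV s u) (updV t u) := by
  funext x
  rw [override_apply, override_apply, dom_updV]
  by_cases hs : x ∈ dom s
  · simp [hs]
  · rw [if_neg hs, if_neg hs, updV_apply, updV_apply, dom_override]
    have hxs' : x ∉ dom s' := by rw [hs']; exact hs
    by_cases ht : x ∈ dom t <;> by_cases hu : x ∈ dom u <;>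
      simp [override_apply, ht, hu, hxs']

/-- OV2 -/
theorem override_updV_self : override (updV t u) u = override u t := by
  funext x
  rw [override_apply, override_apply, updV_apply, dom_updV]
  by_cases ht : x ∈ dom t <;> by_cases hu : x ∈ dom u <;> simp [ht, hu]
  · simp [dom] at ht hu; simp [ht, hu]

/-- OV3'' -/
theorem updV_override_absorb (hag : ∀ x, x ∈ dom f → x ∈ dom g → x ∉ dom u → g x = f x) :
    updV f (override u g) = updV f u := by
  funext x
  rw [updV_apply, updV_apply, dom_override]
  by_cases hf : x ∈ dom f <;> by_cases hu : x ∈ dom u <;> by_cases hg : x ∈ dom g <;>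
    simp [override_apply, hf, hu, hg]
  (try exact hag x hf hg hu)

/-- F -/
theorem updV_eq_restrict (hsub : dom f ∩ dom u ⊆ W) (hW : W ⊆ dom f) :
    updV f u = updV f (override (restrictV u W) (restrictV f W)) := by
  funext x
  rw [updV_apply, updV_apply, dom_override, dom_restrictV, dom_restrictV]
  by_cases hf : x ∈ dom f <;> by_cases hu : x ∈ dom u <;> by_cases hw : x ∈ W <;>
    simp [override_apply, restrictV, dom_restrictV, hf, hu, hw] <;>
    first
      | exact absurd (hsub ⟨hf, hu⟩) hw
      | (simp [dom, not_not] at hf; simp [hf])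

theorem dom_restrict_override (hsub : dom f ∩ dom u ⊆ W) (hW : W ⊆ dom f) :
    dom (override (restrictV u W) (restrictV f W)) = W := by
  rw [dom_override, dom_restrictV, dom_restrictV]
  ext x; constructor
  · rintro (⟨hx, _⟩ | ⟨hx, _⟩) <;> exact hx
  · intro hx; exact Or.inr ⟨hx, hW hx⟩

/-- undo -/
theorem updV_undo (hsub : dom f ∩ dom u ⊆ W) (hW : W ⊆ dom f) :
    updV (updV f u) (restrictV f W) = f := by
  funext x
  rw [updV_apply, updV_apply, dom_updV, dom_restrictV]
  by_cases hf : x ∈ dom f <;> by_cases hu : x ∈ dom u <;> by_cases hw : x ∈ W <;>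
    simp [restrictV, hf, hu, hw] <;>
    first
      | exact absurd (hsub ⟨hf, hu⟩) hw
      | (simp [dom, not_not] at hf; simp [hf])

theorem restrict_override_left : restrictV (override f g) (dom f) = f := by
  funext x
  by_cases hf : x ∈ dom f <;> simp [restrictV, override_apply, hf]
  simp [dom] at hf; exact hf.symm

theorem restrict_override_right (hc : compatV f g) : restrictV (override f g) (dom g) = g := by
  funext x
  by_cases hg : x ∈ dom g <;> simp [restrictV, override_apply, hg]
  · by_cases hf : x ∈ dom f
    · simp [hf]; exact hc x ⟨hf, hg⟩
    · simp [hf]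
  · simp [dom] at hg; exact hg.symm

theorem decomp_unique {a b a' b' : α → Option β} (heq : override a b = override a' b')
    (hda : dom a = dom a') (hdb : dom b = dom b')
    (hab : compatV a b) (hab' : compatV a' b') : a = a' ∧ b = b' := by
  constructor
  · have h1 : restrictV (override a b) (dom a) = a := restrict_override_left
    have h2 : restrictV (override a' b') (dom a') = a' := restrict_override_left
    rw [heq, hda, h2] at h1; exact h1.symm
  · have h1 : restrictV (override a b) (dom b) = b := restrict_override_right hab
    have h2 : restrictV (override a' b') (dom b') = b' := restrict_override_right hab'
    rw [heq, hdb, h2] at h1; exact h1.symm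

end ValLemmas
section TTSBLemmas

variable {Var Data BCh CCh : Type} {X : Set Var}

theorem dom_oplus {f : Valn Var Data} {d : NNReal} : dom (oplus X f d) = dom f := by
  ext x
  by_cases hx : x ∈ X <;> simp [oplus, dom, hx, Option.map_eq_none_iff]

theorem compat_oplus {f g : Valn Var Data} {d : NNReal} (hc : compatV f g) :
    compatV (oplus X f d) (oplus X g d) := by
  intro x hx
  simp only [dom_oplus] at hx
  simp only [oplus]
  by_cases hxX : x ∈ X <;> simp [hxX, hc x hx]

theorem Compatible.symm' {T1 T2 : PreTTSB Var Data BCh CCh} (h : Compatible T1 T2) :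
    Compatible T2 T1 := ⟨h.2.1, h.1, compatV_symm h.2.2⟩

theorem Compatible.inter_sub {T1 T2 : PreTTSB Var Data BCh CCh} (h12 : Compatible T1 T2) :
    T1.V ∩ T2.V ⊆ T1.E ∩ T2.E := by
  rintro x ⟨hx1, hx2⟩
  constructor
  · rcases (show x ∈ T1.E ∪ T1.H from hx1) with he | hh
    · exact he
    · exact absurd (show x ∈ T1.H ∩ T2.V from ⟨hh, hx2⟩) (by simp [h12.1])
  · rcases (show x ∈ T2.E ∪ T2.H from hx2) with he | hh
    · exact he
    · exact absurd (show x ∈ T2.H ∩ T1.V from ⟨hh, hx1⟩) (by simp [h12.2.1])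

theorem IsTTSB.updV_mem {T : PreTTSB Var Data BCh CCh} (h : IsTTSB X T)
    {s u : Valn Var Data} (hs : s ∈ T.S) (hsub : dom s ∩ dom u ⊆ T.E) :
    updV s u ∈ T.S := by
  have hds := h.statesDom s hs
  have hE : T.E ⊆ dom s := by rw [hds]; exact Set.subset_union_left
  rw [updV_eq_restrict hsub hE]
  exact h.axII _ hs (dom_restrict_override hsub hE)

theorem IsTTSB.recv_undo {T : PreTTSB Var Data BCh CCh} (h : IsTTSB X T)
    {b : Bool} {s u t : Valn Var Data} {c : CCh} (hs : s ∈ T.S)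
    (hsub : dom s ∩ dom u ⊆ T.E) (htr : T.Tr b (updV s u) (Act.recv c) t) :
    ∃ t', T.Tr b s (Act.recv c) t' := by
  have hds := h.statesDom s hs
  have hE : T.E ⊆ dom s := by rw [hds]; exact Set.subset_union_left
  have hdom : dom (restrictV s T.E) = T.E := by
    rw [dom_restrictV]; exact Set.inter_eq_left.mpr hE
  obtain ⟨t', ht'⟩ := h.axIIIc (restrictV s T.E) c hdom htr
  rw [updV_undo hsub hE] at ht'
  exact ⟨t', ht'⟩

theorem IsTTSB.brecv_undo {T : PreTTSB Var Data BCh CCh} (h : IsTTSB X T)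
    {b : Bool} {s u t : Valn Var Data} {δ : BCh} (hs : s ∈ T.S)
    (hsub : dom s ∩ dom u ⊆ T.E) (htr : T.Tr b (updV s u) (Act.brecv δ) t) :
    ∃ t', T.Tr b s (Act.brecv δ) t' := by
  have hds := h.statesDom s hs
  have hE : T.E ⊆ dom s := by rw [hds]; exact Set.subset_union_left
  have hdom : dom (restrictV s T.E) = T.E := by
    rw [dom_restrictV]; exact Set.inter_eq_left.mpr hE
  obtain ⟨t', ht'⟩ := h.axIIIb (restrictV s T.E) δ hdom htr
  rw [updV_undo hsub hE] at ht'
  exact ⟨t', ht'⟩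

theorem IsTTSB.no_committed_delay {T : PreTTSB Var Data BCh CCh} (h : IsTTSB X T)
    {s t : Valn Var Data} {d : NNReal} (htr : T.Tr true s (Act.delay d) t) : False := by
  rcases h.axI htr htr with hsync | ⟨heq, _⟩
  · simp [Act.isSync] at hsync
  · cases heq

theorem comm_par {T1 T2 : PreTTSB Var Data BCh CCh}
    (h1 : IsTTSB X T1) (h2 : IsTTSB X T2) (h12 : Compatible T1 T2)
    {r s : Valn Var Data} (hr : r ∈ T1.S) (hs : s ∈ T2.S) (hc : compatV r s) :
    (par T1 T2).Comm (override r s) ↔ (T1.Comm r ∨ T2.Comm s) := by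
  have hdr := h1.statesDom r hr
  have hds := h2.statesDom s hs
  have sub2 : ∀ {u : Valn Var Data}, u ∈ T1.S → dom s ∩ dom u ⊆ T2.E := by
    intro u hu
    rw [hds, h1.statesDom u hu]
    exact fun x hx => (h12.inter_sub ⟨hx.2, hx.1⟩).2
  have sub1 : ∀ {u : Valn Var Data}, u ∈ T2.S → dom r ∩ dom u ⊆ T1.E := by
    intro u hu
    rw [hdr, h2.statesDom u hu]
    exact fun x hx => (h12.inter_sub ⟨hx.1, hx.2⟩).1
  constructor
  · rintro ⟨a, t, htr⟩
    generalize hv : override r s = v at htr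
    generalize hb : (true : Bool) = bb at htr
    cases htr with
    | time₁ hr' hs' hc' ht1 ht2 => exact absurd hb (by simp)
    | time₂ hr' hs' hc' ht1 ht2 => exact absurd hb (by simp)
    | ext₁ hr' hs' hc' ha ht =>
      obtain ⟨he1, he2⟩ := decomp_unique hv
        (by rw [hdr, h1.statesDom _ hr']) (by rw [hds, h2.statesDom _ hs']) hc hc'
      subst he1; subst he2
      cases hb
      exact Or.inl ⟨_, _, ht⟩
    | ext₂ hr' hs' hc' ha ht =>
      obtain ⟨he1, he2⟩ := decomp_unique hv
        (by rw [hdr, h1.statesDom _ hr']) (by rw [hds, h2.statesDom _ hs']) hc hc'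
      subst he1; subst he2
      cases hb
      exact Or.inr ⟨_, _, ht⟩
    | tau₁ hr' hs' hc' ht hcm =>
      obtain ⟨he1, he2⟩ := decomp_unique hv
        (by rw [hdr, h1.statesDom _ hr']) (by rw [hds, h2.statesDom _ hs']) hc hc'
      subst he1; subst he2
      cases hb
      exact Or.inl ⟨_, _, ht⟩
    | tau₂ hr' hs' hc' ht hcm =>
      obtain ⟨he1, he2⟩ := decomp_unique hv
        (by rw [hdr, h1.statesDom _ hr']) (by rw [hds, h2.statesDom _ hs']) hc hc'
      subst he1; subst he2
      cases hb
      exact Or.inr ⟨_, _, ht⟩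
    | sync₁ hr' hs' hc' ht1 ht2 hcm =>
      obtain ⟨he1, he2⟩ := decomp_unique hv
        (by rw [hdr, h1.statesDom _ hr']) (by rw [hds, h2.statesDom _ hs']) hc hc'
      subst he1; subst he2
      rcases Bool.or_eq_true_iff.mp hb.symm with hb | hb
      · subst hb; exact Or.inl ⟨_, _, ht1⟩
      · subst hb
        obtain ⟨t', ht'⟩ := h2.recv_undo hs (sub2 (h1.trMem ht1).2) ht2
        exact Or.inr ⟨_, _, ht'⟩
    | sync₂ hr' hs' hc' ht1 ht2 hcm =>
      obtain ⟨he1, he2⟩ := decomp_unique hv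
        (by rw [hdr, h1.statesDom _ hr']) (by rw [hds, h2.statesDom _ hs']) hc hc'
      subst he1; subst he2
      rcases Bool.or_eq_true_iff.mp hb.symm with hb | hb
      · subst hb; exact Or.inr ⟨_, _, ht1⟩
      · subst hb
        obtain ⟨t', ht'⟩ := h1.recv_undo hr (sub1 (h2.trMem ht1).2) ht2
        exact Or.inl ⟨_, _, ht'⟩
    | snd₁ hr' hs' hc' ht1 ht2 =>
      obtain ⟨he1, he2⟩ := decomp_unique hv
        (by rw [hdr, h1.statesDom _ hr']) (by rw [hds, h2.statesDom _ hs']) hc hc'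
      subst he1; subst he2
      rcases Bool.or_eq_true_iff.mp hb.symm with hb | hb
      · subst hb; exact Or.inl ⟨_, _, ht1⟩
      · subst hb
        obtain ⟨t', ht'⟩ := h2.brecv_undo hs (sub2 (h1.trMem ht1).2) ht2
        exact Or.inr ⟨_, _, ht'⟩
    | snd₂ hr' hs' hc' ht1 ht2 =>
      obtain ⟨he1, he2⟩ := decomp_unique hv
        (by rw [hdr, h1.statesDom _ hr']) (by rw [hds, h2.statesDom _ hs']) hc hc'
      subst he1; subst he2
      rcases Bool.or_eq_true_iff.mp hb.symm with hb | hb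
      · subst hb; exact Or.inr ⟨_, _, ht1⟩
      · subst hb
        obtain ⟨t', ht'⟩ := h1.brecv_undo hr (sub1 (h2.trMem ht1).2) ht2
        exact Or.inl ⟨_, _, ht'⟩
    | rcv₁ hr' hs' hc' ht1 ht2 =>
      obtain ⟨he1, he2⟩ := decomp_unique hv
        (by rw [hdr, h1.statesDom _ hr']) (by rw [hds, h2.statesDom _ hs']) hc hc'
      subst he1; subst he2
      rcases Bool.or_eq_true_iff.mp hb.symm with hb | hb
      · subst hb; exact Or.inl ⟨_, _, ht1⟩
      · subst hb; exact Or.inr ⟨_, _, ht2⟩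
    | rcv₂ hr' hs' hc' ht1 ht2 =>
      obtain ⟨he1, he2⟩ := decomp_unique hv
        (by rw [hdr, h1.statesDom _ hr']) (by rw [hds, h2.statesDom _ hs']) hc hc'
      subst he1; subst he2
      rcases Bool.or_eq_true_iff.mp hb.symm with hb | hb
      · subst hb; exact Or.inr ⟨_, _, ht1⟩
      · subst hb; exact Or.inl ⟨_, _, ht2⟩
  · rintro (⟨a, t, htr⟩ | ⟨a, t, htr⟩)
    · cases a with
      | bsend δ =>
        have hmem : updV s t ∈ T2.S := h2.updV_mem hs (sub2 (h1.trMem htr).2)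
        obtain ⟨b', s', h'⟩ := h2.axV δ _ hmem
        exact ⟨_, _, ParTr.snd₁ hr hs hc htr h'⟩
      | brecv δ =>
        obtain ⟨b', s', h'⟩ := h2.axV δ s hs
        exact ⟨_, _, ParTr.rcv₁ hr hs hc htr h'⟩
      | send c => exact ⟨_, _, ParTr.ext₁ hr hs hc (by constructor) htr⟩
      | recv c => exact ⟨_, _, ParTr.ext₁ hr hs hc (by constructor) htr⟩
      | tau => exact ⟨_, _, ParTr.tau₁ hr hs hc htr (fun _ => rfl)⟩
      | delay d => exact absurd htr (fun htr => h1.no_committed_delay htr)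
    · cases a with
      | bsend δ =>
        have hmem : updV r t ∈ T1.S := h1.updV_mem hr (sub1 (h2.trMem htr).2)
        obtain ⟨b', r', h'⟩ := h1.axV δ _ hmem
        exact ⟨_, _, ParTr.snd₂ hr hs hc htr h'⟩
      | brecv δ =>
        obtain ⟨b', r', h'⟩ := h1.axV δ r hr
        exact ⟨_, _, ParTr.rcv₂ hr hs hc htr h'⟩
      | send c => exact ⟨_, _, ParTr.ext₂ hr hs hc (by constructor) htr⟩
      | recv c => exact ⟨_, _, ParTr.ext₂ hr hs hc (by constructor) htr⟩
      | tau => exact ⟨_, _, ParTr.tau₂ hr hs hc htr (fun _ => rfl)⟩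
      | delay d => exact absurd htr (fun htr => h2.no_committed_delay htr)

theorem parTr_swap {T1 T2 : PreTTSB Var Data BCh CCh} {b : Bool} {v w : Valn Var Data}
    {a : Act BCh CCh} (h : ParTr T1 T2 b v a w) : ParTr T2 T1 b v a w := by
  cases h with
  | ext₁ hr hs hc ha ht =>
    rw [override_comm hc]; exact ParTr.ext₂ hs hr (compatV_symm hc) ha ht
  | ext₂ hr hs hc ha ht =>
    rw [override_comm hc]; exact ParTr.ext₁ hs hr (compatV_symm hc) ha ht
  | tau₁ hr hs hc ht hcm =>
    rw [override_comm hc]; exact ParTr.tau₂ hs hr (compatV_symm hc) ht hcm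
  | tau₂ hr hs hc ht hcm =>
    rw [override_comm hc]; exact ParTr.tau₁ hs hr (compatV_symm hc) ht hcm
  | sync₁ hr hs hc ht1 ht2 hcm =>
    rw [override_comm hc]; exact ParTr.sync₂ hs hr (compatV_symm hc) ht1 ht2 hcm
  | sync₂ hr hs hc ht1 ht2 hcm =>
    rw [override_comm hc]; exact ParTr.sync₁ hs hr (compatV_symm hc) ht1 ht2 hcm
  | time₁ hr hs hc ht1 ht2 =>
    rw [override_comm hc]; exact ParTr.time₂ hs hr (compatV_symm hc) ht1 ht2
  | time₂ hr hs hc ht1 ht2 =>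
    rw [override_comm hc]; exact ParTr.time₁ hs hr (compatV_symm hc) ht1 ht2
  | snd₁ hr hs hc ht1 ht2 =>
    rw [override_comm hc]; exact ParTr.snd₂ hs hr (compatV_symm hc) ht1 ht2
  | snd₂ hr hs hc ht1 ht2 =>
    rw [override_comm hc]; exact ParTr.snd₁ hs hr (compatV_symm hc) ht1 ht2
  | rcv₁ hr hs hc ht1 ht2 =>
    rw [override_comm hc]; exact ParTr.rcv₂ hs hr (compatV_symm hc) ht1 ht2
  | rcv₂ hr hs hc ht1 ht2 =>
    rw [override_comm hc]; exact ParTr.rcv₁ hs hr (compatV_symm hc) ht1 ht2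

end TTSBLemmas
section AssocLemma

variable {Var Data BCh CCh : Type} {X : Set Var}

theorem eq_on_E {T : PreTTSB Var Data BCh CCh} {u w : Valn Var Data}
    (h : restrictV u T.E = restrictV w T.E) {x : Var} (hx : x ∈ T.E) : u x = w x := by
  have := congrFun h x
  simpa [restrictV, hx] using this

theorem compat_updV_override_self {s t u : Valn Var Data} :
    compatV (updV s u) (updV t (override u s)) := by
  intro x hx
  simp only [dom_updV] at hx
  rw [updV_apply, updV_apply, if_pos hx.1, if_pos hx.2, dom_override]
  by_cases hu : x ∈ dom u <;> simp [override_apply, hu, hx.1, Set.mem_union]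

theorem parTr_assoc {T1 T2 T3 : PreTTSB Var Data BCh CCh}
    (h1 : IsTTSB X T1) (h2 : IsTTSB X T2) (h3 : IsTTSB X T3)
    (h12 : Compatible T1 T2) (h13 : Compatible T1 T3) (h23 : Compatible T2 T3)
    {b : Bool} {v w : Valn Var Data} {a : Act BCh CCh}
    (h : ParTr (par T1 T2) T3 b v a w) : ParTr T1 (par T2 T3) b v a w := by
  have mem23 : ∀ {s t : Valn Var Data}, s ∈ T2.S → t ∈ T3.S → compatV s t →
      override s t ∈ (par T2 T3).S := fun hs ht hc => ⟨_, hs, _, ht, hc, rfl⟩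
  cases h with
  | ext₁ hr hs hc ha ht =>
    rename_i r12 t r12'
    cases ht with
    | tau₁ _ _ _ _ _ => exact False.elim ha
    | tau₂ _ _ _ _ _ => exact False.elim ha
    | sync₁ _ _ _ _ _ _ => exact False.elim ha
    | sync₂ _ _ _ _ _ _ => exact False.elim ha
    | time₁ _ _ _ _ _ => exact False.elim ha
    | time₂ _ _ _ _ _ => exact False.elim ha
    | snd₁ _ _ _ _ _ => exact False.elim ha
    | snd₂ _ _ _ _ _ => exact False.elim ha
    | rcv₁ _ _ _ _ _ => exact False.elim ha
    | rcv₂ _ _ _ _ _ => exact False.elim ha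
    | ext₁ hr1 hs1 hc1 ha1 htt =>
      rename_i r s r'
      obtain ⟨hrt, hst⟩ := (compatV_override_iff hc1).mp hc
      have e1 : override (override r s) t = override r (override s t) := override_assoc
      have e2 : override (override r' s) t = override r' (override s t) := override_assoc
      rw [e1, e2]
      exact ParTr.ext₁ hr1 (mem23 hs1 hs hst)
        ((compatV_override_right_iff hst).mpr ⟨hc1, hrt⟩) ha htt
    | ext₂ hr1 hs1 hc1 ha1 htt =>
      rename_i r s s'
      obtain ⟨hrt, hst⟩ := (compatV_override_iff hc1).mp hc
      have step : ParTr T2 T3 b (override s t) a (override s' t) :=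
        ParTr.ext₁ hs1 hs hst ha htt
      have main := ParTr.ext₂ hr1 (mem23 hs1 hs hst)
        ((compatV_override_right_iff hst).mpr ⟨hc1, hrt⟩) ha step
      have e1 : override (override r s) t = override r (override s t) := override_assoc
      have e2 : override (override s' r) t = override (override s' t) r := by
        rw [override_assoc, override_assoc, override_comm (compatV_symm hrt)]
      rw [e1, e2]
      exact main
  | ext₂ hr hs hc ha ht =>
    rename_i r12 t t'
    obtain ⟨r, hr1, s, hs2, hrs, rfl⟩ := hr
    obtain ⟨hrt, hst⟩ := (compatV_override_iff hrs).mp hc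
    have step : ParTr T2 T3 b (override s t) a (override t' s) :=
      ParTr.ext₂ hs2 hs hst ha ht
    have main := ParTr.ext₂ hr1 (mem23 hs2 hs hst)
      ((compatV_override_right_iff hst).mpr ⟨hrs, hrt⟩) ha step
    have e1 : override (override r s) t = override r (override s t) := override_assoc
    have e2 : override t' (override r s) = override (override t' s) r := by
      rw [override_assoc, override_comm hrs]
    rw [e1, e2]
    exact main
  | tau₁ hr hs hc ht hcm =>
    rename_i r12 t r12'
    cases ht with
    | ext₁ hr1 hs1 hc1 ha1 htt => exact False.elim ha1
    | ext₂ hr1 hs1 hc1 ha1 htt => exact False.elim ha1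
    | tau₁ hr1 hs1 hc1 htt hcm1 =>
      rename_i r s r'
      obtain ⟨hrt, hst⟩ := (compatV_override_iff hc1).mp hc
      have hcm' : (par T2 T3).Comm (override s t) → b = true := by
        intro hco
        rcases (comm_par h2 h3 h23 hs1 hs hst).mp hco with h' | h'
        · exact hcm1 h'
        · exact hcm h'
      have main := ParTr.tau₁ hr1 (mem23 hs1 hs hst)
        ((compatV_override_right_iff hst).mpr ⟨hc1, hrt⟩) htt hcm'
      have e1 : override (override r s) t = override r (override s t) := override_assoc
      have e2 : override (override r' s) t = override r' (override s t) := override_assoc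
      rw [e1, e2]
      exact main
    | tau₂ hr1 hs1 hc1 htt hcm1 =>
      rename_i r s s'
      obtain ⟨hrt, hst⟩ := (compatV_override_iff hc1).mp hc
      have step : ParTr T2 T3 b (override s t) Act.tau (override s' t) :=
        ParTr.tau₁ hs1 hs hst htt hcm
      have main := ParTr.tau₂ hr1 (mem23 hs1 hs hst)
        ((compatV_override_right_iff hst).mpr ⟨hc1, hrt⟩) step hcm1
      have e1 : override (override r s) t = override r (override s t) := override_assoc
      have e2 : override (override s' r) t = override (override s' t) r := by
        rw [override_assoc, override_assoc, override_comm (compatV_symm hrt)]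
      rw [e1, e2]
      exact main
    | sync₁ hr1 hs1 hc1 htt1 htt2 hcm1 =>
      rename_i r s r' s' c b1 b2
      obtain ⟨hrt, hst⟩ := (compatV_override_iff hc1).mp hc
      have hr' := (h1.trMem htt1).2
      have hdr' : dom r' = T1.V := h1.statesDom _ hr'
      have hdt : dom t = T3.V := h3.statesDom _ hs
      have htmem : updV t r' ∈ T3.S := h3.updV_mem hs
        (by rw [hdt, hdr']; exact fun x hx => (h13.inter_sub ⟨hx.2, hx.1⟩).2)
      have step : ParTr T2 T3 b2 (override (updV s r') (updV t r')) (Act.recv c)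
          (override s' (updV t r')) :=
        ParTr.ext₁ (h2.trMem htt2).1 htmem (updV_compat hst) (by constructor) htt2
      have hsrc : updV (override s t) r' = override (updV s r') (updV t r') := updV_override
      rw [← hsrc] at step
      have hcm' : T1.Comm r ∨ (par T2 T3).Comm (override s t) → (b1 || b2) = true := by
        rintro (h' | h')
        · exact hcm1 (Or.inl h')
        · rcases (comm_par h2 h3 h23 hs1 hs hst).mp h' with h'' | h''
          · exact hcm1 (Or.inr h'')
          · exact hcm h''
      have main := ParTr.sync₁ hr1 (mem23 hs1 hs hst)
        ((compatV_override_right_iff hst).mpr ⟨hc1, hrt⟩) htt1 step hcm'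
      have e1 : override (override r s) t = override r (override s t) := override_assoc
      have e2 : override (override s' r') t = override (override s' (updV t r')) r' := by
        rw [override_assoc, override_assoc, override_updV_self]
      rw [e1, e2]
      exact main
    | sync₂ hr1 hs1 hc1 htt1 htt2 hcm1 =>
      rename_i r s r' s' c b1 b2
      obtain ⟨hrt, hst⟩ := (compatV_override_iff hc1).mp hc
      have step : ParTr T2 T3 b1 (override s t) (Act.send c) (override s' t) :=
        ParTr.ext₁ hs1 hs hst (by constructor) htt1
      have habs : updV r (override s' t) = updV r s' :=
        updV_override_absorb (fun x hx1 hx2 _ => (hrt x ⟨hx1, hx2⟩).symm)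
      have hcm' : (par T2 T3).Comm (override s t) ∨ T1.Comm r → (b1 || b2) = true := by
        rintro (h' | h')
        · rcases (comm_par h2 h3 h23 hs1 hs hst).mp h' with h'' | h''
          · exact hcm1 (Or.inl h'')
          · exact hcm h''
        · exact hcm1 (Or.inr h')
      have main := ParTr.sync₂ hr1 (mem23 hs1 hs hst)
        ((compatV_override_right_iff hst).mpr ⟨hc1, hrt⟩) step (habs.symm ▸ htt2) hcm'
      have e1 : override (override r s) t = override r (override s t) := override_assoc
      have e2 : override (override r' s') t = override r' (override s' t) := override_assoc
      rw [e1, e2]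
      exact main
  | tau₂ hr hs hc ht hcm =>
    rename_i r12 t t'
    obtain ⟨r, hr1, s, hs2, hrs, rfl⟩ := hr
    obtain ⟨hrt, hst⟩ := (compatV_override_iff hrs).mp hc
    have hcomm12 := comm_par h1 h2 h12 hr1 hs2 hrs
    have step : ParTr T2 T3 b (override s t) Act.tau (override t' s) :=
      ParTr.tau₂ hs2 hs hst ht (fun h' => hcm (hcomm12.mpr (Or.inr h')))
    have main := ParTr.tau₂ hr1 (mem23 hs2 hs hst)
      ((compatV_override_right_iff hst).mpr ⟨hrs, hrt⟩) step
      (fun h' => hcm (hcomm12.mpr (Or.inl h')))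
    have e1 : override (override r s) t = override r (override s t) := override_assoc
    have e2 : override t' (override r s) = override (override t' s) r := by
      rw [override_assoc, override_comm hrs]
    rw [e1, e2]
    exact main
  | sync₁ hr hs hc ht1 ht2 hcm =>
    rename_i r12 t r12' t' c bb bb'
    cases ht1 with
    | ext₁ hr1 hs1 hc1 ha1 htt =>
      rename_i r s r'
      obtain ⟨hrt, hst⟩ := (compatV_override_iff hc1).mp hc
      have hr' := (h1.trMem htt).2
      have hdr' : dom r' = T1.V := h1.statesDom _ hr'
      have hds : dom s = T2.V := h2.statesDom _ hs1
      have hsmem : updV s r' ∈ T2.S := h2.updV_mem hs1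
        (by rw [hds, hdr']; exact fun x hx => (h12.inter_sub ⟨hx.2, hx.1⟩).2)
      have step : ParTr T2 T3 bb' (override (updV s r') (updV t (override r' s)))
          (Act.recv c) (override t' (updV s r')) :=
        ParTr.ext₂ hsmem (h3.trMem ht2).1 compat_updV_override_self (by constructor) ht2
      have hsrc : override (updV s r') (updV t (override r' s)) = updV (override s t) r' := by
        rw [override_updV_updV_override rfl, ← updV_override]
      rw [hsrc] at step
      have hcomm12 := comm_par h1 h2 h12 hr1 hs1 hc1
      have hcomm23 := comm_par h2 h3 h23 hs1 hs hst
      have hcm' : T1.Comm r ∨ (par T2 T3).Comm (override s t) → (bb || bb') = true := by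
        rintro (h' | h')
        · exact hcm (Or.inl (hcomm12.mpr (Or.inl h')))
        · rcases hcomm23.mp h' with h'' | h''
          · exact hcm (Or.inl (hcomm12.mpr (Or.inr h'')))
          · exact hcm (Or.inr h'')
      have main := ParTr.sync₁ hr1 (mem23 hs1 hs hst)
        ((compatV_override_right_iff hst).mpr ⟨hc1, hrt⟩) htt step hcm'
      have e1 : override (override r s) t = override r (override s t) := override_assoc
      have e2 : override t' (override r' s) = override (override t' (updV s r')) r' := by
        rw [override_assoc, override_updV_self]
      rw [e1, e2]
      exact main
    | ext₂ hr1 hs1 hc1 ha1 htt =>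
      rename_i r s s'
      obtain ⟨hrt, hst⟩ := (compatV_override_iff hc1).mp hc
      have habs : updV t (override s' r) = updV t s' :=
        updV_override_absorb (fun x hx1 hx2 _ => hrt x ⟨hx2, hx1⟩)
      have hcomm12 := comm_par h1 h2 h12 hr1 hs1 hc1
      have hcm23 : T2.Comm s ∨ T3.Comm t → (bb || bb') = true := by
        rintro (h' | h')
        · exact hcm (Or.inl (hcomm12.mpr (Or.inr h')))
        · exact hcm (Or.inr h')
      have step : ParTr T2 T3 (bb || bb') (override s t) Act.tau (override t' s') :=
        ParTr.sync₁ hs1 hs hst htt (habs ▸ ht2) hcm23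
      have main := ParTr.tau₂ hr1 (mem23 hs1 hs hst)
        ((compatV_override_right_iff hst).mpr ⟨hc1, hrt⟩) step
        (fun h' => hcm (Or.inl (hcomm12.mpr (Or.inl h'))))
      have e1 : override (override r s) t = override r (override s t) := override_assoc
      have e2 : override t' (override s' r) = override (override t' s') r :=
        override_assoc.symm
      rw [e1, e2]
      exact main
  | sync₂ hr hs hc ht1 ht2 hcm =>
    rename_i r12 t r12' t' c bb bb'
    obtain ⟨r, hr1, s, hs2, hrs, rfl⟩ := hr
    obtain ⟨hrt, hst⟩ := (compatV_override_iff hrs).mp hc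
    have hupd : updV (override r s) t' = override (updV r t') (updV s t') := updV_override
    rw [hupd] at ht2
    have hcomm12 := comm_par h1 h2 h12 hr1 hs2 hrs
    have hcomm23 := comm_par h2 h3 h23 hs2 hs hst
    generalize hq : override (updV r t') (updV s t') = q at ht2
    cases ht2 with
    | ext₁ hr0 hs0 hc0 ha0 htt =>
      rename_i r0 s0 r'
      obtain ⟨he1, he2⟩ := decomp_unique hq
        (by rw [dom_updV, h1.statesDom _ hr1, h1.statesDom _ hr0])
        (by rw [dom_updV, h2.statesDom _ hs2, h2.statesDom _ hs0])
        (updV_compat hrs) hc0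
      subst he1; subst he2
      have step : ParTr T2 T3 bb (override s t) (Act.send c) (override t' s) :=
        ParTr.ext₂ hs2 hs hst (by constructor) ht1
      have habs : updV r (override t' s) = updV r t' :=
        updV_override_absorb (fun x hx1 hx2 _ => (hrs x ⟨hx1, hx2⟩).symm)
      have hcm' : (par T2 T3).Comm (override s t) ∨ T1.Comm r → (bb || bb') = true := by
        rintro (h' | h')
        · rcases hcomm23.mp h' with h'' | h''
          · exact hcm (Or.inr (hcomm12.mpr (Or.inr h'')))
          · exact hcm (Or.inl h'')
        · exact hcm (Or.inr (hcomm12.mpr (Or.inl h')))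
      have main := ParTr.sync₂ hr1 (mem23 hs2 hs hst)
        ((compatV_override_right_iff hst).mpr ⟨hrs, hrt⟩) step (habs.symm ▸ htt) hcm'
      have e1 : override (override r s) t = override r (override s t) := override_assoc
      have e2 : override (override r' (updV s t')) t' = override r' (override t' s) := by
        rw [override_assoc, override_updV_self]
      rw [e1, e2]
      exact main
    | ext₂ hr0 hs0 hc0 ha0 htt =>
      rename_i r0 s0 s'
      obtain ⟨he1, he2⟩ := decomp_unique hq
        (by rw [dom_updV, h1.statesDom _ hr1, h1.statesDom _ hr0])
        (by rw [dom_updV, h2.statesDom _ hs2, h2.statesDom _ hs0])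
        (updV_compat hrs) hc0
      subst he1; subst he2
      have hcm23 : T3.Comm t ∨ T2.Comm s → (bb || bb') = true := by
        rintro (h' | h')
        · exact hcm (Or.inl h')
        · exact hcm (Or.inr (hcomm12.mpr (Or.inr h')))
      have step : ParTr T2 T3 (bb || bb') (override s t) Act.tau (override s' t') :=
        ParTr.sync₂ hs2 hs hst ht1 htt hcm23
      have main := ParTr.tau₂ hr1 (mem23 hs2 hs hst)
        ((compatV_override_right_iff hst).mpr ⟨hrs, hrt⟩) step
        (fun h' => hcm (Or.inr (hcomm12.mpr (Or.inl h'))))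
      have e1 : override (override r s) t = override r (override s t) := override_assoc
      have e2 : override (override s' (updV r t')) t' = override (override s' t') r := by
        rw [override_assoc, override_updV_self, ← override_assoc]
      rw [e1, e2]
      exact main
  | time₁ hr hs hc ht1 ht2 =>
    rename_i r12 t r12' t' d
    generalize hb0 : (false : Bool) = bb0 at ht1
    cases ht1 with
    | ext₁ hr1 hs1 hc1 ha1 htt => exact False.elim ha1
    | ext₂ hr1 hs1 hc1 ha1 htt => exact False.elim ha1
    | time₁ hr1 hs1 hc1 htt1 htt2 =>
      rename_i r s r' s'
      obtain ⟨hrt, hst⟩ := (compatV_override_iff hc1).mp hc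
      have step : ParTr T2 T3 false (override s t) (Act.delay d) (override s' t') :=
        ParTr.time₁ hs1 hs hst htt2 ht2
      have main := ParTr.time₁ hr1 (mem23 hs1 hs hst)
        ((compatV_override_right_iff hst).mpr ⟨hc1, hrt⟩) htt1 step
      have e1 : override (override r s) t = override r (override s t) := override_assoc
      have e2 : override (override r' s') t' = override r' (override s' t') := override_assoc
      rw [e1, e2]
      exact main
    | time₂ hr1 hs1 hc1 htt1 htt2 =>
      rename_i r s r' s'
      obtain ⟨hrt, hst⟩ := (compatV_override_iff hc1).mp hc
      have hcrs' : compatV r' s' := by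
        rw [h1.axIV htt2, h2.axIV htt1]; exact compat_oplus hc1
      have step : ParTr T2 T3 false (override s t) (Act.delay d) (override s' t') :=
        ParTr.time₁ hs1 hs hst htt1 ht2
      have main := ParTr.time₁ hr1 (mem23 hs1 hs hst)
        ((compatV_override_right_iff hst).mpr ⟨hc1, hrt⟩) htt2 step
      have e1 : override (override r s) t = override r (override s t) := override_assoc
      have e2 : override (override s' r') t' = override r' (override s' t') := by
        rw [override_comm (compatV_symm hcrs'), override_assoc]
      rw [e1, e2]
      exact main
  | time₂ hr hs hc ht1 ht2 =>
    rename_i r12 t r12' t' d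
    generalize hb0 : (false : Bool) = bb0 at ht2
    cases ht2 with
    | ext₁ hr1 hs1 hc1 ha1 htt => exact False.elim ha1
    | ext₂ hr1 hs1 hc1 ha1 htt => exact False.elim ha1
    | time₁ hr1 hs1 hc1 htt1 htt2 =>
      rename_i r s r' s'
      obtain ⟨hrt, hst⟩ := (compatV_override_iff hc1).mp hc
      have hcrs' : compatV r' s' := by
        rw [h1.axIV htt1, h2.axIV htt2]; exact compat_oplus hc1
      have step : ParTr T2 T3 false (override s t) (Act.delay d) (override t' s') :=
        ParTr.time₂ hs1 hs hst ht1 htt2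
      have main := ParTr.time₂ hr1 (mem23 hs1 hs hst)
        ((compatV_override_right_iff hst).mpr ⟨hc1, hrt⟩) step htt1
      have e1 : override (override r s) t = override r (override s t) := override_assoc
      have e2 : override t' (override r' s') = override (override t' s') r' := by
        rw [override_comm hcrs', override_assoc]
      rw [e1, e2]
      exact main
    | time₂ hr1 hs1 hc1 htt1 htt2 =>
      rename_i r s r' s'
      obtain ⟨hrt, hst⟩ := (compatV_override_iff hc1).mp hc
      have step : ParTr T2 T3 false (override s t) (Act.delay d) (override t' s') :=
        ParTr.time₂ hs1 hs hst ht1 htt1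
      have main := ParTr.time₂ hr1 (mem23 hs1 hs hst)
        ((compatV_override_right_iff hst).mpr ⟨hc1, hrt⟩) step htt2
      have e1 : override (override r s) t = override r (override s t) := override_assoc
      have e2 : override t' (override s' r') = override (override t' s') r' :=
        override_assoc.symm
      rw [e1, e2]
      exact main
  | snd₁ hr hs hc ht1 ht2 =>
    rename_i r12 t r12' t' δ bb bb'
    cases ht1 with
    | ext₁ hr1 hs1 hc1 ha1 htt => exact False.elim ha1
    | ext₂ hr1 hs1 hc1 ha1 htt => exact False.elim ha1
    | snd₁ hr1 hs1 hc1 htt1 htt2 =>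
      rename_i r s r' s2' b1 b2
      obtain ⟨hrt, hst⟩ := (compatV_override_iff hc1).mp hc
      have hds2' : dom s2' = T2.V := h2.statesDom _ (h2.trMem htt2).2
      have hds : dom s = T2.V := h2.statesDom _ hs1
      have hdt : dom t = T3.V := h3.statesDom _ hs
      have hv2 : restrictV (updV s r') T2.E = restrictV s2' T2.E := h2.axVI δ htt2
      have hcomp : compatV (updV s r') (updV t (override r' s2')) := by
        intro x hx
        simp only [dom_updV] at hx
        have hxE : x ∈ T2.E ∩ T3.E := h23.inter_sub ⟨hds ▸ hx.1, hdt ▸ hx.2⟩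
        have hx2' : x ∈ dom s2' := by rw [hds2', ← hds]; exact hx.1
        rw [updV_apply, updV_apply, if_pos hx.1, if_pos hx.2, dom_override]
        by_cases hxr' : x ∈ dom r'
        · simp [override_apply, hxr', Set.mem_union]
        · have hval : updV s r' x = s2' x := eq_on_E hv2 hxE.1
          rw [updV_apply, if_pos hx.1, if_neg hxr'] at hval
          rw [if_neg hxr', if_pos ((Set.mem_union _ _ _).mpr (Or.inr hx2')),
            override_apply, if_neg hxr']
          exact hval
      have step : ParTr T2 T3 (b2 || bb')
          (override (updV s r') (updV t (override r' s2'))) (Act.brecv δ)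
          (override s2' t') :=
        ParTr.rcv₁ (h2.trMem htt2).1 (h3.trMem ht2).1 hcomp htt2 ht2
      have hsrc : override (updV s r') (updV t (override r' s2')) =
          updV (override s t) r' := by
        rw [override_updV_updV_override (by rw [hds2', hds]), ← updV_override]
      rw [hsrc] at step
      have main := ParTr.snd₁ hr1 (mem23 hs1 hs hst)
        ((compatV_override_right_iff hst).mpr ⟨hc1, hrt⟩) htt1 step
      have hbit : ((b1 || b2) || bb') = (b1 || (b2 || bb')) := by
        cases b1 <;> cases b2 <;> rfl
      have e1 : override (override r s) t = override r (override s t) := override_assoc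
      have e2 : override (override r' s2') t' = override r' (override s2' t') :=
        override_assoc
      rw [hbit, e1, e2]
      exact main
    | snd₂ hr1 hs1 hc1 htt1 htt2 =>
      rename_i r s r' s2' b1 b2
      obtain ⟨hrt, hst⟩ := (compatV_override_iff hc1).mp hc
      have hdr : dom r = T1.V := h1.statesDom _ hr1
      have hds : dom s = T2.V := h2.statesDom _ hs1
      have hdt : dom t = T3.V := h3.statesDom _ hs
      have hds2' : dom s2' = T2.V := h2.statesDom _ (h2.trMem htt1).2
      have hdr' : dom r' = T1.V := h1.statesDom _ (h1.trMem htt2).2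
      have hdt' : dom t' = T3.V := h3.statesDom _ (h3.trMem ht2).2
      have hv1 : restrictV (updV r s2') T1.E = restrictV r' T1.E := h1.axVI δ htt2
      have hv3 : restrictV (updV t (override s2' r')) T3.E = restrictV t' T3.E :=
        h3.axVI δ ht2
      have hr'r : ∀ x, x ∈ T1.E → x ∉ dom s2' → x ∈ dom r → r' x = r x := by
        intro x hxE hx2 hxr
        have hval := (eq_on_E hv1 hxE).symm
        rwa [updV_apply, if_pos hxr, if_neg hx2] at hval
      have habs : updV t (override s2' r') = updV t s2' := by
        apply updV_override_absorb
        intro x hxt hxr' hx2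
        have hxE : x ∈ T1.E ∩ T3.E := h13.inter_sub ⟨hdr' ▸ hxr', hdt ▸ hxt⟩
        rw [hr'r x hxE.1 hx2 (by rw [hdr, ← hdr']; exact hxr')]
        exact hrt x ⟨by rw [hdr, ← hdr']; exact hxr', hxt⟩
      have step : ParTr T2 T3 (b1 || bb') (override s t) (Act.bsend δ)
          (override s2' t') :=
        ParTr.snd₁ hs1 hs hst htt1 (habs ▸ ht2)
      have ht'x : ∀ x, x ∈ T3.E → t' x = updV t (override s2' r') x :=
        fun x hx => (eq_on_E hv3 hx).symm
      have habs2 : updV r (override s2' t') = updV r s2' := by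
        apply updV_override_absorb
        intro x hxr hxt' hx2
        have hxE : x ∈ T1.E ∩ T3.E := h13.inter_sub ⟨hdr ▸ hxr, hdt' ▸ hxt'⟩
        have hxr' : x ∈ dom r' := by rw [hdr', ← hdr]; exact hxr
        have hxt : x ∈ dom t := by rw [hdt, ← hdt']; exact hxt'
        rw [ht'x x hxE.2, updV_apply, if_pos hxt, dom_override,
          if_pos ((Set.mem_union _ _ _).mpr (Or.inr hxr')), override_apply, if_neg hx2]
        rw [hr'r x hxE.1 hx2 hxr]
      have main := ParTr.snd₂ hr1 (mem23 hs1 hs hst)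
        ((compatV_override_right_iff hst).mpr ⟨hc1, hrt⟩) step (habs2.symm ▸ htt2)
      have hcr't' : compatV r' t' := by
        intro x hx
        have hxE : x ∈ T1.E ∩ T3.E := h13.inter_sub ⟨hdr' ▸ hx.1, hdt' ▸ hx.2⟩
        have hxt : x ∈ dom t := by rw [hdt, ← hdt']; exact hx.2
        rw [ht'x x hxE.2, updV_apply, if_pos hxt, dom_override,
          if_pos ((Set.mem_union _ _ _).mpr (Or.inr hx.1)), override_apply]
        by_cases hx2 : x ∈ dom s2'
        · rw [if_pos hx2]
          have hval := eq_on_E hv1 hxE.1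
          rw [updV_apply, if_pos (by rw [hdr, ← hdr']; exact hx.1), if_pos hx2] at hval
          exact hval.symm
        · rw [if_neg hx2]
      have hbit : ((b1 || b2) || bb') = ((b1 || bb') || b2) := by
        cases b1 <;> cases b2 <;> cases bb' <;> rfl
      have e1 : override (override r s) t = override r (override s t) := override_assoc
      have e2 : override (override s2' r') t' = override (override s2' t') r' := by
        rw [override_assoc, override_assoc, override_comm hcr't']
      rw [hbit, e1, e2]
      exact main
  | snd₂ hr hs hc ht1 ht2 =>
    rename_i r12 t r12' t' δ bb bb'
    obtain ⟨r, hr1, s, hs2, hrs, rfl⟩ := hr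
    obtain ⟨hrt, hst⟩ := (compatV_override_iff hrs).mp hc
    have hdr : dom r = T1.V := h1.statesDom _ hr1
    have hds : dom s = T2.V := h2.statesDom _ hs2
    have hdt' : dom t' = T3.V := h3.statesDom _ (h3.trMem ht1).2
    have hupd : updV (override r s) t' = override (updV r t') (updV s t') := updV_override
    rw [hupd] at ht2
    generalize hq : override (updV r t') (updV s t') = q at ht2
    cases ht2 with
    | ext₁ hr0 hs0 hc0 ha0 htt => exact False.elim ha0
    | ext₂ hr0 hs0 hc0 ha0 htt => exact False.elim ha0
    | rcv₁ hr0 hs0 hc0 htt1 htt2 =>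
      rename_i r0 s0 r' s' b1 b2
      obtain ⟨he1, he2⟩ := decomp_unique hq
        (by rw [dom_updV, h1.statesDom _ hr1, h1.statesDom _ hr0])
        (by rw [dom_updV, h2.statesDom _ hs2, h2.statesDom _ hs0])
        (updV_compat hrs) hc0
      subst he1; subst he2
      have hdr' : dom r' = T1.V := h1.statesDom _ (h1.trMem htt1).2
      have hds' : dom s' = T2.V := h2.statesDom _ (h2.trMem htt2).2
      have hv1 : restrictV (updV r t') T1.E = restrictV r' T1.E := h1.axVI δ htt1
      have hv2 : restrictV (updV s t') T2.E = restrictV s' T2.E := h2.axVI δ htt2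
      have step : ParTr T2 T3 (bb || b2) (override s t) (Act.bsend δ)
          (override t' s') :=
        ParTr.snd₂ hs2 hs hst ht1 htt2
      have habs : updV r (override t' s') = updV r t' := by
        apply updV_override_absorb
        intro x hxr hxs' hxt'
        have hxE : x ∈ T1.E ∩ T2.E := h12.inter_sub ⟨hdr ▸ hxr, hds' ▸ hxs'⟩
        have hxs : x ∈ dom s := by rw [hds, ← hds']; exact hxs'
        have hval := (eq_on_E hv2 hxE.2).symm
        rw [updV_apply, if_pos hxs, if_neg hxt'] at hval
        rw [hval]
        exact (hrs x ⟨hxr, hxs⟩).symm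
      have main := ParTr.snd₂ hr1 (mem23 hs2 hs hst)
        ((compatV_override_right_iff hst).mpr ⟨hrs, hrt⟩) step (habs.symm ▸ htt1)
      have hcr's' : compatV r' s' := by
        intro x hx
        have hxE : x ∈ T1.E ∩ T2.E := h12.inter_sub ⟨hdr' ▸ hx.1, hds' ▸ hx.2⟩
        have hxr : x ∈ dom r := by rw [hdr, ← hdr']; exact hx.1
        have hxs : x ∈ dom s := by rw [hds, ← hds']; exact hx.2
        have e1' := (eq_on_E hv1 hxE.1).symm
        have e2' := (eq_on_E hv2 hxE.2).symm
        rw [updV_apply, if_pos hxr] at e1'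
        rw [updV_apply, if_pos hxs] at e2'
        rw [e1', e2']
        by_cases hxt : x ∈ dom t'
        · rw [if_pos hxt, if_pos hxt]
        · rw [if_neg hxt, if_neg hxt]; exact hrs x ⟨hxr, hxs⟩
      have hbit : (bb || (b1 || b2)) = ((bb || b2) || b1) := by
        cases bb <;> cases b1 <;> cases b2 <;> rfl
      have e1 : override (override r s) t = override r (override s t) := override_assoc
      have e2 : override t' (override r' s') = override (override t' s') r' := by
        rw [override_assoc, override_comm hcr's']
      rw [hbit, e1, e2]
      exact main
    | rcv₂ hr0 hs0 hc0 htt1 htt2 =>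
      rename_i r0 s0 r' s' b1 b2
      obtain ⟨he1, he2⟩ := decomp_unique hq
        (by rw [dom_updV, h1.statesDom _ hr1, h1.statesDom _ hr0])
        (by rw [dom_updV, h2.statesDom _ hs2, h2.statesDom _ hs0])
        (updV_compat hrs) hc0
      subst he1; subst he2
      have step : ParTr T2 T3 (bb || b1) (override s t) (Act.bsend δ)
          (override t' s') :=
        ParTr.snd₂ hs2 hs hst ht1 htt1
      have hds' : dom s' = T2.V := h2.statesDom _ (h2.trMem htt1).2
      have hv2 : restrictV (updV s t') T2.E = restrictV s' T2.E := h2.axVI δ htt1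
      have habs : updV r (override t' s') = updV r t' := by
        apply updV_override_absorb
        intro x hxr hxs' hxt'
        have hxE : x ∈ T1.E ∩ T2.E := h12.inter_sub ⟨hdr ▸ hxr, hds' ▸ hxs'⟩
        have hxs : x ∈ dom s := by rw [hds, ← hds']; exact hxs'
        have hval := (eq_on_E hv2 hxE.2).symm
        rw [updV_apply, if_pos hxs, if_neg hxt'] at hval
        rw [hval]
        exact (hrs x ⟨hxr, hxs⟩).symm
      have main := ParTr.snd₂ hr1 (mem23 hs2 hs hst)
        ((compatV_override_right_iff hst).mpr ⟨hrs, hrt⟩) step (habs.symm ▸ htt2)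
      have hbit : (bb || (b1 || b2)) = ((bb || b1) || b2) := by
        cases bb <;> cases b1 <;> cases b2 <;> rfl
      have e1 : override (override r s) t = override r (override s t) := override_assoc
      have e2 : override t' (override s' r') = override (override t' s') r' :=
        override_assoc.symm
      rw [hbit, e1, e2]
      exact main
  | rcv₁ hr hs hc ht1 ht2 =>
    rename_i r12 t r12' t' δ bb bb'
    cases ht1 with
    | ext₁ hr1 hs1 hc1 ha1 htt => exact False.elim ha1
    | ext₂ hr1 hs1 hc1 ha1 htt => exact False.elim ha1
    | rcv₁ hr1 hs1 hc1 htt1 htt2 =>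
      rename_i r s r' s' b1 b2
      obtain ⟨hrt, hst⟩ := (compatV_override_iff hc1).mp hc
      have step : ParTr T2 T3 (b2 || bb') (override s t) (Act.brecv δ)
          (override s' t') :=
        ParTr.rcv₁ hs1 hs hst htt2 ht2
      have main := ParTr.rcv₁ hr1 (mem23 hs1 hs hst)
        ((compatV_override_right_iff hst).mpr ⟨hc1, hrt⟩) htt1 step
      have hbit : ((b1 || b2) || bb') = (b1 || (b2 || bb')) := by
        cases b1 <;> cases b2 <;> rfl
      have e1 : override (override r s) t = override r (override s t) := override_assoc
      have e2 : override (override r' s') t' = override r' (override s' t') :=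
        override_assoc
      rw [hbit, e1, e2]
      exact main
    | rcv₂ hr1 hs1 hc1 htt1 htt2 =>
      rename_i r s r' s' b1 b2
      obtain ⟨hrt, hst⟩ := (compatV_override_iff hc1).mp hc
      have hdr : dom r = T1.V := h1.statesDom _ hr1
      have hdt : dom t = T3.V := h3.statesDom _ hs
      have hdr' : dom r' = T1.V := h1.statesDom _ (h1.trMem htt2).2
      have hdt' : dom t' = T3.V := h3.statesDom _ (h3.trMem ht2).2
      have hv1 : restrictV r T1.E = restrictV r' T1.E := h1.axVI δ htt2
      have hv3 : restrictV t T3.E = restrictV t' T3.E := h3.axVI δ ht2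
      have step : ParTr T2 T3 (b1 || bb') (override s t) (Act.brecv δ)
          (override s' t') :=
        ParTr.rcv₁ hs1 hs hst htt1 ht2
      have main := ParTr.rcv₂ hr1 (mem23 hs1 hs hst)
        ((compatV_override_right_iff hst).mpr ⟨hc1, hrt⟩) step htt2
      have hcr't' : compatV r' t' := by
        intro x hx
        have hxE : x ∈ T1.E ∩ T3.E := h13.inter_sub ⟨hdr' ▸ hx.1, hdt' ▸ hx.2⟩
        have hxr : x ∈ dom r := by rw [hdr, ← hdr']; exact hx.1
        have hxt : x ∈ dom t := by rw [hdt, ← hdt']; exact hx.2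
        rw [← eq_on_E hv1 hxE.1, ← eq_on_E hv3 hxE.2]
        exact hrt x ⟨hxr, hxt⟩
      have hbit : ((b1 || b2) || bb') = ((b1 || bb') || b2) := by
        cases b1 <;> cases b2 <;> cases bb' <;> rfl
      have e1 : override (override r s) t = override r (override s t) := override_assoc
      have e2 : override (override s' r') t' = override (override s' t') r' := by
        rw [override_assoc, override_assoc, override_comm hcr't']
      rw [hbit, e1, e2]
      exact main
  | rcv₂ hr hs hc ht1 ht2 =>
    rename_i r12 t r12' t' δ bb bb'
    obtain ⟨r, hr1, s, hs2, hrs, rfl⟩ := hr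
    obtain ⟨hrt, hst⟩ := (compatV_override_iff hrs).mp hc
    have hdr : dom r = T1.V := h1.statesDom _ hr1
    have hds : dom s = T2.V := h2.statesDom _ hs2
    generalize hq : override r s = q at ht2
    cases ht2 with
    | ext₁ hr0 hs0 hc0 ha0 htt => exact False.elim ha0
    | ext₂ hr0 hs0 hc0 ha0 htt => exact False.elim ha0
    | rcv₁ hr0 hs0 hc0 htt1 htt2 =>
      rename_i r0 s0 r' s' b1 b2
      obtain ⟨he1, he2⟩ := decomp_unique hq
        (by rw [hdr, h1.statesDom _ hr0])
        (by rw [hds, h2.statesDom _ hs0])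
        hrs hc0
      subst he1; subst he2
      have hdr' : dom r' = T1.V := h1.statesDom _ (h1.trMem htt1).2
      have hds' : dom s' = T2.V := h2.statesDom _ (h2.trMem htt2).2
      have hv1 : restrictV r T1.E = restrictV r' T1.E := h1.axVI δ htt1
      have hv2 : restrictV s T2.E = restrictV s' T2.E := h2.axVI δ htt2
      have step : ParTr T2 T3 (bb || b2) (override s t) (Act.brecv δ)
          (override t' s') :=
        ParTr.rcv₂ hs2 hs hst ht1 htt2
      have main := ParTr.rcv₂ hr1 (mem23 hs2 hs hst)
        ((compatV_override_right_iff hst).mpr ⟨hrs, hrt⟩) step htt1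
      have hcr's' : compatV r' s' := by
        intro x hx
        have hxE : x ∈ T1.E ∩ T2.E := h12.inter_sub ⟨hdr' ▸ hx.1, hds' ▸ hx.2⟩
        have hxr : x ∈ dom r := by rw [hdr, ← hdr']; exact hx.1
        have hxs : x ∈ dom s := by rw [hds, ← hds']; exact hx.2
        rw [← eq_on_E hv1 hxE.1, ← eq_on_E hv2 hxE.2]
        exact hrs x ⟨hxr, hxs⟩
      have hbit : (bb || (b1 || b2)) = ((bb || b2) || b1) := by
        cases bb <;> cases b1 <;> cases b2 <;> rfl
      have e1 : override (override r s) t = override r (override s t) := override_assoc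
      have e2 : override t' (override r' s') = override (override t' s') r' := by
        rw [override_assoc, override_comm hcr's']
      rw [hbit, e1, e2]
      exact main
    | rcv₂ hr0 hs0 hc0 htt1 htt2 =>
      rename_i r0 s0 r' s' b1 b2
      obtain ⟨he1, he2⟩ := decomp_unique hq
        (by rw [hdr, h1.statesDom _ hr0])
        (by rw [hds, h2.statesDom _ hs0])
        hrs hc0
      subst he1; subst he2
      have step : ParTr T2 T3 (bb || b1) (override s t) (Act.brecv δ)
          (override t' s') :=
        ParTr.rcv₂ hs2 hs hst ht1 htt1
      have main := ParTr.rcv₂ hr1 (mem23 hs2 hs hst)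
        ((compatV_override_right_iff hst).mpr ⟨hrs, hrt⟩) step htt2
      have hbit : (bb || (b1 || b2)) = ((bb || b1) || b2) := by
        cases bb <;> cases b1 <;> cases b2 <;> rfl
      have e1 : override (override r s) t = override r (override s t) := override_assoc
      have e2 : override t' (override s' r') = override (override t' s') r' :=
        override_assoc.symm
      rw [hbit, e1, e2]
      exact main

end AssocLemma
/-- Theorem 1 (Associativity): parallel composition of TTSBs is associative on
pairwise compatible TTSBs, and the intermediate compositions are compatible. -/
theorem par_assoc (X : Set Var) (T1 T2 T3 : PreTTSB Var Data BCh CCh)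
    (h1 : IsTTSB X T1) (h2 : IsTTSB X T2) (h3 : IsTTSB X T3)
    (h12 : Compatible T1 T2) (h13 : Compatible T1 T3) (h23 : Compatible T2 T3) :
    Compatible (par T1 T2) T3 ∧ Compatible T1 (par T2 T3) ∧
      par (par T1 T2) T3 = par T1 (par T2 T3) := by
  have n12 := Set.eq_empty_iff_forall_notMem.mp h12.1
  have n21 := Set.eq_empty_iff_forall_notMem.mp h12.2.1
  have n13 := Set.eq_empty_iff_forall_notMem.mp h13.1
  have n31 := Set.eq_empty_iff_forall_notMem.mp h13.2.1
  have n23 := Set.eq_empty_iff_forall_notMem.mp h23.1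
  have n32 := Set.eq_empty_iff_forall_notMem.mp h23.2.1
  have c12 := h12.2.2
  have c13 := h13.2.2
  have c23 := h23.2.2
  refine ⟨⟨?_, ?_, ?_⟩, ⟨?_, ?_, ?_⟩, ?_⟩
  · apply Set.eq_empty_iff_forall_notMem.mpr
    rintro x ⟨(hh | hh), hv⟩
    · exact n13 x ⟨hh, hv⟩
    · exact n23 x ⟨hh, hv⟩
  · apply Set.eq_empty_iff_forall_notMem.mpr
    rintro x ⟨hh, ((he | he) | (he | he))⟩
    · exact n31 x ⟨hh, (Or.inl he : x ∈ T1.E ∪ T1.H)⟩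
    · exact n32 x ⟨hh, (Or.inl he : x ∈ T2.E ∪ T2.H)⟩
    · exact n31 x ⟨hh, (Or.inr he : x ∈ T1.E ∪ T1.H)⟩
    · exact n32 x ⟨hh, (Or.inr he : x ∈ T2.E ∪ T2.H)⟩
  · exact (compatV_override_iff c12).mpr ⟨c13, c23⟩
  · apply Set.eq_empty_iff_forall_notMem.mpr
    rintro x ⟨hh, ((he | he) | (he | he))⟩
    · exact n12 x ⟨hh, (Or.inl he : x ∈ T2.E ∪ T2.H)⟩
    · exact n13 x ⟨hh, (Or.inl he : x ∈ T3.E ∪ T3.H)⟩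
    · exact n12 x ⟨hh, (Or.inr he : x ∈ T2.E ∪ T2.H)⟩
    · exact n13 x ⟨hh, (Or.inr he : x ∈ T3.E ∪ T3.H)⟩
  · apply Set.eq_empty_iff_forall_notMem.mpr
    rintro x ⟨(hh | hh), hv⟩
    · exact n21 x ⟨hh, hv⟩
    · exact n31 x ⟨hh, hv⟩
  · exact (compatV_override_right_iff c23).mpr ⟨c12, c13⟩
  · have ext : ∀ (A B : PreTTSB Var Data BCh CCh), A.E = B.E → A.H = B.H →
        A.S = B.S → A.init = B.init → A.Tr = B.Tr → A = B := by
      rintro ⟨⟩ ⟨⟩ rfl rfl rfl rfl rfl; rfl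
    apply ext
    · exact Set.union_assoc _ _ _
    · exact Set.union_assoc _ _ _
    · ext v
      constructor
      · rintro ⟨u, ⟨r, hr, s, hs, hrs, rfl⟩, t, ht, hc, rfl⟩
        obtain ⟨hrt, hst⟩ := (compatV_override_iff hrs).mp hc
        exact ⟨r, hr, override s t, ⟨s, hs, t, ht, hst, rfl⟩,
          (compatV_override_right_iff hst).mpr ⟨hrs, hrt⟩, override_assoc⟩
      · rintro ⟨r, hr, u, ⟨s, hs, t, ht, hst, rfl⟩, hc, rfl⟩
        obtain ⟨hrs, hrt⟩ := (compatV_override_right_iff hst).mp hc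
        exact ⟨override r s, ⟨r, hr, s, hs, hrs, rfl⟩, t, ht,
          (compatV_override_iff hrs).mpr ⟨hrt, hst⟩, override_assoc.symm⟩
    · exact override_assoc
    · funext b v a w
      apply propext
      constructor
      · exact parTr_assoc h1 h2 h3 h12 h13 h23
      · intro h
        have s1 := parTr_swap h
        have s2 := parTr_assoc h2 h3 h1 h23 h12.symm' h13.symm' s1
        have s3 := parTr_swap s2
        have s4 := parTr_assoc h3 h1 h2 h13.symm' h23.symm' h12 s3
        exact parTr_swap s4

end TTSBpaper
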